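/- arXiv:2506.21730 — 5 statements merged into one kernel-verified Lean document; each statement's English description precedes it below -/
import Mathlib

section
/- For every real t > 0 and α > 0, the derivative of ξ(t) = (1 + 2α/t)((t+2α)/(t+1+2α))^{2α} is negative; hence ξ is strictly decreasing on (0,∞). -/
open Real

lemma aux_hasderiv (α t : ℝ) (hα : 0 < α) (ht : 0 < t) :
    HasDerivAt (fun t : ℝ => (1 + 2 * α / t) * ((t + 2 * α) / (t + 1 + 2 * α)) ^ (2 * α))
      ((0 + 2 * α * -(t ^ 2)⁻¹) * ((t + 2 * α) / (t + 1 + 2 * α)) ^ (2 * α)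
        + (1 + 2 * α / t) * (2 * α * ((t + 2 * α) / (t + 1 + 2 * α)) ^ (2 * α - 1)
            * ((1 * (t + 1 + 2 * α) - (t + 2 * α) * 1) / (t + 1 + 2 * α) ^ 2))) t := by
  have h2 : (0:ℝ) < t + 1 + 2 * α := by linarith
  have hu : HasDerivAt (fun t : ℝ => (t + 2 * α) / (t + 1 + 2 * α))
      ((1 * (t + 1 + 2 * α) - (t + 2 * α) * 1) / (t + 1 + 2 * α) ^ 2) t :=
    ((hasDerivAt_id t).add_const _).div (((hasDerivAt_id t).add_const 1).add_const (2*α)) h2.ne'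
  have hr : 0 < (t + 2 * α) / (t + 1 + 2 * α) := div_pos (by linarith) h2
  have hpow := hu.rpow_const (p := 2 * α) (Or.inl hr.ne')
  have hg : HasDerivAt (fun t : ℝ => 1 + 2 * α / t) (0 + 2 * α * -(t ^ 2)⁻¹) t := by
    have : HasDerivAt (fun t : ℝ => 2 * α / t) (2 * α * -(t ^ 2)⁻¹) t := by
      simpa [div_eq_mul_inv] using (hasDerivAt_inv ht.ne').const_mul (2 * α)
    simpa using this.const_add 1
  have := hg.fun_mul hpow
  refine this.congr_deriv ?_
  ring

lemma aux_deriv_neg (α t : ℝ) (hα : 0 < α) (ht : 0 < t) :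
    deriv (fun t : ℝ => (1 + 2 * α / t) * ((t + 2 * α) / (t + 1 + 2 * α)) ^ (2 * α)) t < 0 := by
  have h2 : (0:ℝ) < t + 1 + 2 * α := by linarith
  have h1 : (0:ℝ) < t + 2 * α := by linarith
  have hr : 0 < (t + 2 * α) / (t + 1 + 2 * α) := div_pos h1 h2
  rw [(aux_hasderiv α t hα ht).deriv]
  set r := (t + 2 * α) / (t + 1 + 2 * α) with hrdef
  have hP : 0 < r ^ (2 * α - 1) := rpow_pos_of_pos hr _
  have hsplit : r ^ (2 * α) = r ^ (2 * α - 1) * r := by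
    conv_lhs => rw [show (2*α) = (2*α-1)+1 by ring]
    exact Real.rpow_add_one hr.ne' _
  rw [hsplit]
  set P := r ^ (2 * α - 1)
  have hE : (0 + 2 * α * -(t ^ 2)⁻¹) * r + (1 + 2 * α / t) *
      (2 * α * ((1 * (t + 1 + 2 * α) - (t + 2 * α) * 1) / (t + 1 + 2 * α) ^ 2)) < 0 := by
    rw [hrdef]
    have key : (0 + 2 * α * -(t ^ 2)⁻¹) * ((t + 2 * α) / (t + 1 + 2 * α)) + (1 + 2 * α / t) *
        (2 * α * ((1 * (t + 1 + 2 * α) - (t + 2 * α) * 1) / (t + 1 + 2 * α) ^ 2))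
        = -(2 * α * (1 + 2 * α) * (t + 2 * α)) / (t ^ 2 * (t + 1 + 2 * α) ^ 2) := by
      field_simp
      ring
    rw [key, neg_div]
    have : 0 < 2 * α * (1 + 2 * α) * (t + 2 * α) / (t ^ 2 * (t + 1 + 2 * α) ^ 2) := by positivity
    linarith
  calc (0 + 2 * α * -(t ^ 2)⁻¹) * (P * r) + (1 + 2 * α / t) *
        (2 * α * P * ((1 * (t + 1 + 2 * α) - (t + 2 * α) * 1) / (t + 1 + 2 * α) ^ 2))
      = P * ((0 + 2 * α * -(t ^ 2)⁻¹) * r + (1 + 2 * α / t) *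
        (2 * α * ((1 * (t + 1 + 2 * α) - (t + 2 * α) * 1) / (t + 1 + 2 * α) ^ 2))) := by ring
    _ < 0 := mul_neg_of_pos_of_neg hP hE

theorem stmt3 (α : ℝ) (hα : 0 < α) :
    (∀ t : ℝ, 0 < t →
      deriv (fun t : ℝ => (1 + 2 * α / t) * ((t + 2 * α) / (t + 1 + 2 * α)) ^ (2 * α)) t < 0) ∧
    StrictAntiOn (fun t : ℝ => (1 + 2 * α / t) * ((t + 2 * α) / (t + 1 + 2 * α)) ^ (2 * α))
      (Set.Ioi 0) := by
  refine ⟨fun t ht => aux_deriv_neg α t hα ht, ?_⟩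
  apply strictAntiOn_of_deriv_neg (convex_Ioi 0)
  · exact fun x hx => ((aux_hasderiv α x hα hx).continuousAt).continuousWithinAt
  · intro x hx
    rw [interior_Ioi] at hx
    exact aux_deriv_neg α x hα hx
end

section
/- Let (E_k)_{k≥0} be a nonnegative real sequence, α > 0, and (δ_k)_{k≥0} a nonnegative sequence such that (k+1+2α)^{2α}(1 + 2α/(k+1)) E_{k+1} − (k+1+2α)^{2α} E_k + δ_k ≤ 0 for all k. Then ∑_{k=0}^∞ δ_k < ∞ and hence lim_{k→∞} δ_k = 0. -/
/-- Key inequality: `(k+2+2α)^(2α) ≤ (k+1+2α)^(2α) * (1 + 2α/(k+1))`. -/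
lemma key_ineq (α : ℝ) (hα : 0 < α) (k : ℕ) :
    ((k : ℝ) + 2 + 2 * α) ^ (2 * α)
      ≤ ((k : ℝ) + 1 + 2 * α) ^ (2 * α) * (1 + 2 * α / ((k : ℝ) + 1)) := by
  set t : ℝ := (k : ℝ) + 1 with ht
  set a : ℝ := 2 * α with ha
  have ht0 : (0 : ℝ) < t := by positivity
  have ha0 : (0 : ℝ) < a := by positivity
  have hta : (0 : ℝ) < t + a := by linarith
  have hta1 : (0 : ℝ) < t + 1 + a := by linarith
  have hr : (0 : ℝ) < (t + 1 + a) / (t + a) := by positivity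
  -- log r ≤ 1/(t+a)
  have hlogr : Real.log ((t + 1 + a) / (t + a)) ≤ 1 / (t + a) := by
    have := Real.log_le_sub_one_of_pos hr
    have heq : (t + 1 + a) / (t + a) - 1 = 1 / (t + a) := by
      field_simp
      ring
    linarith [heq ▸ this]
  -- a/(t+a) ≤ log(1 + a/t)
  have hlog2 : a / (t + a) ≤ Real.log (1 + a / t) := by
    have hx : (0 : ℝ) < 1 + a / t := by positivity
    have h1 : Real.log (1 / (1 + a / t)) ≤ 1 / (1 + a / t) - 1 :=
      Real.log_le_sub_one_of_pos (by positivity)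
    rw [Real.log_div one_ne_zero (ne_of_gt hx), Real.log_one] at h1
    have h2 : 1 / (1 + a / t) - 1 = -(a / (t + a)) := by
      field_simp
      ring
    rw [h2] at h1
    linarith
  have hstep : ((t + 1 + a) / (t + a)) ^ a ≤ 1 + a / t := by
    rw [Real.rpow_def_of_pos hr]
    calc Real.exp (Real.log ((t + 1 + a) / (t + a)) * a)
        ≤ Real.exp (Real.log (1 + a / t)) := by
          apply Real.exp_le_exp.mpr
          have : Real.log ((t + 1 + a) / (t + a)) * a ≤ (1 / (t + a)) * a :=
            mul_le_mul_of_nonneg_right hlogr ha0.le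
          calc Real.log ((t + 1 + a) / (t + a)) * a ≤ (1 / (t + a)) * a := this
            _ = a / (t + a) := by ring
            _ ≤ Real.log (1 + a / t) := hlog2
      _ = 1 + a / t := Real.exp_log (by positivity)
  have hmain : (t + 1 + a) ^ a ≤ (t + a) ^ a * (1 + a / t) := by
    have hsplit : (t + 1 + a) ^ a = (t + a) ^ a * ((t + 1 + a) / (t + a)) ^ a := by
      rw [← Real.mul_rpow hta.le hr.le]
      congr 1
      field_simp
    rw [hsplit]
    exact mul_le_mul_of_nonneg_left hstep (Real.rpow_nonneg hta.le a)
  have e1 : (k : ℝ) + 2 + 2 * α = t + 1 + a := by rw [ht, ha]; ring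
  have e2 : (k : ℝ) + 1 + 2 * α = t + a := by rw [ht, ha]
  rw [e1, e2]
  exact hmain

theorem stmt8 (E δ : ℕ → ℝ) (α : ℝ) (hα : 0 < α)
    (hE : ∀ k, 0 ≤ E k) (hδ : ∀ k, 0 ≤ δ k)
    (hrec : ∀ k : ℕ,
      ((k : ℝ) + 1 + 2 * α) ^ (2 * α) * (1 + 2 * α / ((k : ℝ) + 1)) * E (k + 1)
        - ((k : ℝ) + 1 + 2 * α) ^ (2 * α) * E k + δ k ≤ 0) :
    Summable δ ∧ Filter.Tendsto δ Filter.atTop (nhds 0) := by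
  set f : ℕ → ℝ := fun k => ((k : ℝ) + 1 + 2 * α) ^ (2 * α) * E k with hf
  have hf0 : ∀ k, 0 ≤ f k := fun k =>
    mul_nonneg (Real.rpow_nonneg (by positivity) _) (hE k)
  have hstep : ∀ k, δ k ≤ f k - f (k + 1) := by
    intro k
    have h1 := hrec k
    have h2 : f (k + 1) ≤ ((k : ℝ) + 1 + 2 * α) ^ (2 * α) * (1 + 2 * α / ((k : ℝ) + 1)) * E (k + 1) := by
      simp only [hf]
      push_cast
      have := key_ineq α hα k
      have h3 : ((k : ℝ) + 1 + 1 + 2 * α) ^ (2 * α) ≤ ((k : ℝ) + 1 + 2 * α) ^ (2 * α) * (1 + 2 * α / ((k : ℝ) + 1)) := by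
        convert this using 3; ring
      exact mul_le_mul_of_nonneg_right h3 (hE (k + 1))
    have : f (k + 1) - f k + δ k ≤ 0 := by
      have hfk : f k = ((k : ℝ) + 1 + 2 * α) ^ (2 * α) * E k := rfl
      linarith [h2, h1, hfk]
    linarith
  have hsum : Summable δ := by
    apply summable_of_sum_range_le (c := f 0) hδ
    intro n
    calc ∑ i ∈ Finset.range n, δ i
        ≤ ∑ i ∈ Finset.range n, (f i - f (i + 1)) :=
          Finset.sum_le_sum fun i _ => hstep i
      _ = f 0 - f n := Finset.sum_range_sub' f n
      _ ≤ f 0 := by linarith [hf0 n]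
  exact ⟨hsum, hsum.tendsto_atTop_zero⟩
end

section
/- Let f : H → ℝ be convex and L-smooth, g : H → ℝ ∪ {∞} proper convex lsc, F = f + g with minimum F*, 0 < s ≤ 1/L, and G_s(x) = (x − prox_{sg}(x − s∇f(x)))/s. If F satisfies the Polyak–Łojasiewicz inequality with constant μ > 0 (dist(0, ∂F(y))² ≥ 2μ(F(y) − F*) for all y ∈ dom ∂F), then for every x ∈ H: ‖G_s(x)‖² ≥ 2μ(F(x − sG_s(x)) − F*). -/
open scoped RealInnerProductSpace

lemma my_grad_ineq {H : Type*} [NormedAddCommGroup H] [InnerProductSpace ℝ H]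
    [CompleteSpace H] {f : H → ℝ} {f' : H → H} (hconv : ConvexOn ℝ Set.univ f)
    (hgrad : ∀ z, HasGradientAt f (f' z) z) (a b : H) :
    f a + ⟪f' a, b - a⟫ ≤ f b := by
  rcases eq_or_ne a b with rfl | hab
  · simp
  set q : ℝ → ℝ := fun t => f (a + t • (b - a)) with hq
  have hline : ∀ t : ℝ, HasDerivAt (fun t : ℝ => a + t • (b - a)) (b - a) t := by
    intro t
    simpa using ((hasDerivAt_id t).smul_const (b - a)).const_add a
  have hqderiv : ∀ t : ℝ, HasDerivAt q ⟪f' (a + t • (b - a)), b - a⟫ t := by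
    intro t
    have h1 := (hgrad (a + t • (b - a))).hasFDerivAt.comp_hasDerivAt t (hline t)
    simpa [InnerProductSpace.toDual_apply_apply, hq, Function.comp_def] using h1
  have hqconv : ConvexOn ℝ Set.univ q := by
    have h := hconv.comp_affineMap (AffineMap.lineMap a b : ℝ →ᵃ[ℝ] H)
    have : (f ∘ (AffineMap.lineMap a b : ℝ →ᵃ[ℝ] H)) = q := by
      funext t
      simp only [hq, Function.comp_apply, AffineMap.lineMap_apply_module]
      congr 1
      module
    rw [this] at h
    simpa using h
  have hs := hqconv.le_slope_of_hasDerivAt (Set.mem_univ (0:ℝ)) (Set.mem_univ (1:ℝ))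
    one_pos (hqderiv 0)
  rw [slope_def_field] at hs
  simp [hq] at hs
  linarith

lemma my_coco {H : Type*} [NormedAddCommGroup H] [InnerProductSpace ℝ H]
    [CompleteSpace H] {f : H → ℝ} {f' : H → H} {L : ℝ} (hL : 0 < L)
    (hconv : ConvexOn ℝ Set.univ f)
    (hgrad : ∀ z, HasGradientAt f (f' z) z)
    (hlip : ∀ a b, ‖f' a - f' b‖ ≤ L * ‖a - b‖) (a b : H) :
    ‖f' a - f' b‖ ^ 2 / (2 * L) ≤ ⟪f' a - f' b, a - b⟫ := by
  have descent : ∀ y z : H, f z ≤ f y + ⟪f' y, z - y⟫ + L * ‖z - y‖ ^ 2 := by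
    intro y z
    have h1 := my_grad_ineq hconv hgrad z y
    have h2 : ⟪f' z, y - z⟫ = -⟪f' z, z - y⟫ := by
      rw [← inner_neg_right]; congr 1; abel
    have h3 : ⟪f' z, z - y⟫ - ⟪f' y, z - y⟫ = ⟪f' z - f' y, z - y⟫ :=
      (inner_sub_left _ _ _).symm
    have h4 : ⟪f' z - f' y, z - y⟫ ≤ ‖f' z - f' y‖ * ‖z - y‖ := real_inner_le_norm _ _
    have h5 := hlip z y
    have h6 : (0:ℝ) ≤ ‖z - y‖ := norm_nonneg _
    nlinarith [h1, h4, h5]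
  have half : ∀ a b : H, f b + ⟪f' b, a - b⟫ + (1 / (4 * L)) * ‖f' a - f' b‖ ^ 2 ≤ f a := by
    intro a b
    set d := f' a - f' b with hd
    set z := a - (1 / (2 * L)) • d with hz
    have h1 := my_grad_ineq hconv hgrad b z
    have h2 := descent a z
    have hza : z - a = -((1 / (2 * L)) • d) := by rw [hz]; abel
    have e1 : ⟪f' a, z - a⟫ = -(1 / (2 * L) * ⟪f' a, d⟫) := by
      rw [hza, inner_neg_right, real_inner_smul_right]
    have e2 : ‖z - a‖ ^ 2 = (1 / (2 * L)) ^ 2 * ‖d‖ ^ 2 := by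
      rw [hza, norm_neg, norm_smul, mul_pow]
      congr 1
      rw [Real.norm_eq_abs, sq_abs]
    have e3 : ⟪f' b, z - b⟫ = ⟪f' b, a - b⟫ + ⟪f' b, z - a⟫ := by
      rw [← inner_add_right]; congr 1; abel
    have e4 : ⟪f' b, z - a⟫ = -(1 / (2 * L) * ⟪f' b, d⟫) := by
      rw [hza, inner_neg_right, real_inner_smul_right]
    have e5 : ⟪f' a, d⟫ - ⟪f' b, d⟫ = ‖d‖ ^ 2 := by
      rw [← inner_sub_left, ← hd, real_inner_self_eq_norm_sq]
    have e6 : 1 / (2 * L) * ⟪f' a, d⟫ - 1 / (2 * L) * ⟪f' b, d⟫ = 1 / (2 * L) * ‖d‖ ^ 2 := by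
      rw [← mul_sub, e5]
    have k1 : L * (1 / (2 * L)) ^ 2 = 1 / (4 * L) := by
      field_simp; ring
    have k2 : 1 / (2 * L) * ‖d‖ ^ 2 = 2 * (1 / (4 * L) * ‖d‖ ^ 2) := by
      field_simp; ring
    nlinarith [h1, h2, e1, e2, e3, e4, e6, k1, k2]
  have ha := half a b
  have hb := half b a
  have r1 : ‖f' b - f' a‖ = ‖f' a - f' b‖ := norm_sub_rev _ _
  have r2 : ⟪f' a, b - a⟫ = -⟪f' a, a - b⟫ := by
    rw [← inner_neg_right]; congr 1; abel
  have r3 : ⟪f' a, a - b⟫ - ⟪f' b, a - b⟫ = ⟪f' a - f' b, a - b⟫ :=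
    (inner_sub_left _ _ _).symm
  have k3 : 2 * (1 / (4 * L)) = 1 / (2 * L) := by field_simp; ring
  rw [r1] at hb
  have k4 : ‖f' a - f' b‖ ^ 2 / (2 * L) = 2 * (1 / (4 * L) * ‖f' a - f' b‖ ^ 2) := by
    field_simp; ring
  rw [k4]
  linarith [ha, hb, r2, r3]

theorem stmt11 {H : Type*} [NormedAddCommGroup H] [InnerProductSpace ℝ H] [CompleteSpace H]
    (f : H → ℝ) (f' : H → H) (g : H → ℝ) (μ L s Fstar : ℝ)
    (hμ : 0 < μ) (hL : 0 < L) (hs : 0 < s) (hsL : s ≤ 1 / L)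
    (hconv : ConvexOn ℝ Set.univ f)
    (hgrad : ∀ z, HasGradientAt f (f' z) z)
    (hlip : ∀ a b, ‖f' a - f' b‖ ≤ L * ‖a - b‖)
    (hg : ConvexOn ℝ Set.univ g) (hglsc : LowerSemicontinuous g)
    (hlb : ∀ u, Fstar ≤ f u + g u) (hatt : ∃ u, f u + g u = Fstar)
    (hPL : ∀ y ξ, (∀ u, f u + g u ≥ f y + g y + ⟪ξ, u - y⟫) →
      ‖ξ‖ ^ 2 ≥ 2 * μ * (f y + g y - Fstar))
    (x p : H)
    (hprox : ∀ u, g p + ‖p - (x - s • f' x)‖ ^ 2 / (2 * s) ≤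
      g u + ‖u - (x - s • f' x)‖ ^ 2 / (2 * s))
    (G : H) (hG : G = s⁻¹ • (x - p)) :
    ‖G‖ ^ 2 ≥ 2 * μ * (f (x - s • G) + g (x - s • G) - Fstar) := by
  set w := x - s • f' x with hw
  have hsne : s ≠ 0 := ne_of_gt hs
  have hGfx : G - f' x = s⁻¹ • (w - p) := by
    rw [hG, hw]
    match_scalars <;> field_simp
  -- subgradient inequality for g at p
  have hsub_g : ∀ u, g p + ⟪G - f' x, u - p⟫ ≤ g u := by
    intro u
    refine le_of_forall_pos_le_add fun ε hε => ?_
    set B := ⟪p - w, u - p⟫ with hB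
    set C := ‖u - p‖ ^ 2 with hC
    have hCpos : (0:ℝ) < C + 1 := by positivity
    set t : ℝ := min 1 (2 * s * ε / (C + 1)) with ht
    have ht0 : 0 < t := lt_min one_pos (by positivity)
    have ht1 : t ≤ 1 := min_le_left _ _
    have hCnn : (0:ℝ) ≤ C := by rw [hC]; positivity
    have htle : t * C ≤ 2 * s * ε := by
      calc t * C ≤ (2 * s * ε / (C + 1)) * C :=
            mul_le_mul_of_nonneg_right (min_le_right _ _) hCnn
        _ ≤ 2 * s * ε := by
            rw [div_mul_eq_mul_div, div_le_iff₀ hCpos]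
            nlinarith
    have hconvpt : g (p + t • (u - p)) ≤ (1 - t) * g p + t * g u := by
      have h := hg.2 (Set.mem_univ p) (Set.mem_univ u)
        (by linarith : (0:ℝ) ≤ 1 - t) ht0.le (by ring)
      have heq : (1 - t) • p + t • u = p + t • (u - p) := by module
      rw [heq] at h
      simpa using h
    have hpx := hprox (p + t • (u - p))
    have hexp : ‖p + t • (u - p) - w‖ ^ 2 = ‖p - w‖ ^ 2 + 2 * (t * B) + t ^ 2 * C := by
      have h1 : p + t • (u - p) - w = (p - w) + t • (u - p) := by abel
      rw [h1, norm_add_sq_real, real_inner_smul_right, norm_smul, mul_pow, hB, hC]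
      rw [Real.norm_eq_abs, sq_abs]
    rw [hexp] at hpx
    have key : t * g p ≤ t * g u + (2 * (t * B) + t ^ 2 * C) / (2 * s) := by
      have h2s : (0:ℝ) < 2 * s := by positivity
      have hsplit : (‖p - w‖ ^ 2 + 2 * (t * B) + t ^ 2 * C) / (2 * s)
          = ‖p - w‖ ^ 2 / (2 * s) + (2 * (t * B) + t ^ 2 * C) / (2 * s) := by
        field_simp
        ring
      rw [hsplit] at hpx
      linarith [hconvpt, hpx]
    have hinner : ⟪G - f' x, u - p⟫ = -(s⁻¹ * B) := by
      rw [hGfx, real_inner_smul_left, show w - p = -(p - w) by abel, inner_neg_left, hB]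
      ring
    have h2s : (0:ℝ) < 2 * s := by positivity
    have hquad : t ^ 2 * C / (2 * s) ≤ t * ε := by
      rw [div_le_iff₀ h2s]
      nlinarith [mul_le_mul_of_nonneg_left htle ht0.le]
    have hdiv : t * (g p - g u) ≤ t * (s⁻¹ * B + ε) := by
      have hd1 : (2 * (t * B) + t ^ 2 * C) / (2 * s) = t * (s⁻¹ * B) + t ^ 2 * C / (2 * s) := by
        field_simp
      rw [hd1] at key
      nlinarith [key, hquad]
    have hfin : g p - g u ≤ s⁻¹ * B + ε := by
      have := (mul_le_mul_iff_right₀ ht0).mp hdiv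
      linarith
    rw [hinner]
    linarith
  -- rewrite the evaluation point
  have hxsG : x - s • G = p := by
    rw [hG, smul_smul, mul_inv_cancel₀ hsne, one_smul]
    abel
  rw [hxsG]
  set ξ := (G - f' x) + f' p with hξ
  have hsubF : ∀ u, f u + g u ≥ f p + g p + ⟪ξ, u - p⟫ := by
    intro u
    have h1 := my_grad_ineq hconv hgrad p u
    have h2 := hsub_g u
    have h3 : ⟪ξ, u - p⟫ = ⟪G - f' x, u - p⟫ + ⟪f' p, u - p⟫ := by
      rw [hξ, inner_add_left]
    linarith
  have hPLp := hPL p ξ hsubF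
  have hd := my_coco hL hconv hgrad hlip x p
  have hnorm : ‖ξ‖ ^ 2 ≤ ‖G‖ ^ 2 := by
    set D := ‖f' x - f' p‖ with hD
    set I := ⟪f' x - f' p, x - p⟫ with hI
    have hx1 : ξ = G + (f' p - f' x) := by rw [hξ]; abel
    have hx2 : ‖ξ‖ ^ 2 = ‖G‖ ^ 2 + 2 * ⟪G, f' p - f' x⟫ + ‖f' p - f' x‖ ^ 2 := by
      rw [hx1, norm_add_sq_real]
    have hx3 : ⟪G, f' p - f' x⟫ = -(s⁻¹ * I) := by
      rw [hG, real_inner_smul_left, show f' p - f' x = -(f' x - f' p) by abel,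
        inner_neg_right, hI, real_inner_comm]
      ring
    have hx4 : ‖f' p - f' x‖ = D := by rw [hD]; exact norm_sub_rev _ _
    have hsL' : s * L ≤ 1 := by
      rw [le_div_iff₀ hL] at hsL
      exact hsL
    have h5 : 1 ≤ (s * L)⁻¹ := by
      rw [one_le_inv₀ (by positivity)]
      exact hsL'
    have h6 := mul_le_mul_of_nonneg_left hd (by positivity : (0:ℝ) ≤ 2 * s⁻¹)
    have h7 : 2 * s⁻¹ * (D ^ 2 / (2 * L)) = (s * L)⁻¹ * D ^ 2 := by
      field_simp
    have h8 : D ^ 2 ≤ (s * L)⁻¹ * D ^ 2 :=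
      le_mul_of_one_le_left (by positivity) h5
    rw [h7] at h6
    rw [hx2, hx3, hx4]
    linarith
  linarith [hPLp, hnorm]
end

section
/- Let H be a real Hilbert space and f : H → ℝ twice continuously differentiable. Suppose x : (0,∞) → H is twice differentiable and solves ẍ + (α/t)ẋ + β∇²f(x)ẋ + (γ + αβ/t)∇f(x) = 0, with α, β, γ > 0. Define ε(t) = (1/2)‖ẋ(t) + β∇f(x(t))‖² + γ(f(x(t)) − f*). Then for all t > 0, ε'(t) = −(α/t)‖ẋ(t) + β∇f(x(t))‖² − βγ‖∇f(x(t))‖². -/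
theorem stmt17 {H : Type*} [NormedAddCommGroup H] [InnerProductSpace ℝ H] [CompleteSpace H]
    (f : H → ℝ) (f' : H → H) (f'' : H → H →L[ℝ] H) (α β γ fstar : ℝ)
    (hα : 0 < α) (hβ : 0 < β) (hγ : 0 < γ)
    (hgrad : ∀ z, HasGradientAt f (f' z) z)
    (hhess : ∀ z, HasFDerivAt f' (f'' z) z)
    (hlb : ∀ z, fstar ≤ f z) (hatt : ∃ z, f z = fstar)
    (x v a : ℝ → H)
    (hx : ∀ t > (0 : ℝ), HasDerivAt x (v t) t)
    (hv : ∀ t > (0 : ℝ), HasDerivAt v (a t) t)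
    (hode : ∀ t > (0 : ℝ),
      a t + (α / t) • v t + β • (f'' (x t)) (v t) + (γ + α * β / t) • f' (x t) = 0) :
    ∀ t > (0 : ℝ),
      HasDerivAt (fun τ => (1 / 2) * ‖v τ + β • f' (x τ)‖ ^ 2 + γ * (f (x τ) - fstar))
        (-(α / t) * ‖v t + β • f' (x t)‖ ^ 2 - β * γ * ‖f' (x t)‖ ^ 2) t := by
  intro t ht
  -- derivative of τ ↦ f' (x τ)
  have hF : HasDerivAt (fun τ => f' (x τ)) ((f'' (x t)) (v t)) t :=
    (hhess (x t)).comp_hasDerivAt t (hx t ht)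
  -- derivative of τ ↦ f (x τ)
  have hfx : HasDerivAt (fun τ => f (x τ)) (inner ℝ (f' (x t)) (v t) : ℝ) t := by
    have := ((hgrad (x t)).hasFDerivAt).comp_hasDerivAt t (hx t ht)
    simp at this
    exact this
  -- derivative of w = v + β • f' ∘ x
  have hw : HasDerivAt (fun τ => v τ + β • f' (x τ))
      (a t + β • (f'' (x t)) (v t)) t := (hv t ht).add (hF.const_smul β)
  have hinner : HasDerivAt (fun τ => (inner ℝ (v τ + β • f' (x τ)) (v τ + β • f' (x τ)) : ℝ))
      ((inner ℝ (v t + β • f' (x t)) (a t + β • (f'' (x t)) (v t)) : ℝ) +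
        (inner ℝ (a t + β • (f'' (x t)) (v t)) (v t + β • f' (x t)) : ℝ)) t :=
    hw.inner ℝ hw
  have hsum := (hinner.const_mul (1 / 2 : ℝ)).add ((hfx.sub_const fstar).const_mul γ)
  have heq : (fun τ => (1 / 2) * ‖v τ + β • f' (x τ)‖ ^ 2 + γ * (f (x τ) - fstar))
      = (fun τ => (1 / 2) * (inner ℝ (v τ + β • f' (x τ)) (v τ + β • f' (x τ)) : ℝ)
          + γ * (f (x τ) - fstar)) := by
    funext τ; rw [real_inner_self_eq_norm_sq]
  rw [heq]
  convert hsum using 1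
  case e'_4 => rfl
  case e'_5 => rfl
  case e'_8 => rfl
  have ha : a t = -((α / t) • v t + β • (f'' (x t)) (v t) + (γ + α * β / t) • f' (x t)) := by
    have h := hode t ht
    rw [add_assoc, add_assoc, add_eq_zero_iff_eq_neg] at h
    rwa [← add_assoc] at h
  rw [ha, ← real_inner_self_eq_norm_sq, ← real_inner_self_eq_norm_sq]
  simp only [inner_add_left, inner_add_right, inner_neg_left, inner_neg_right,
    real_inner_smul_left, real_inner_smul_right, real_inner_comm (v t) (f' (x t))]
  field_simp
  ring
end

section
/- Let f : H → ℝ be twice differentiable satisfying the PŁ inequality ‖∇f(x)‖² ≥ 2μ(f(x) − f*) with μ > 0, and let x solve ẍ + (α/t)ẋ + β∇²f(x)ẋ + (γ + αβ/t)∇f(x) = 0 with α, β, γ > 0 and initial velocity ẋ(0) = −β∇f(x(0)). Then f(x(t)) − f* ≤ (f(x₀) − f*) e^{−2μβt} for t ≤ α/(μβ), and f(x(t)) − f* ≤ (f(x₀) − f*)(α/(μβe))^{2α} t^{−2α} for t > α/(μβ). -/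
open RealInnerProductSpace

set_option maxHeartbeats 1000000 in
theorem stmt18 {H : Type*} [NormedAddCommGroup H] [InnerProductSpace ℝ H] [CompleteSpace H]
    (f : H → ℝ) (f' : H → H) (f'' : H → H →L[ℝ] H) (α β γ μ fstar : ℝ)
    (hα : 0 < α) (hβ : 0 < β) (hγ : 0 < γ) (hμ : 0 < μ)
    (hgrad : ∀ z, HasGradientAt f (f' z) z)
    (hhess : ∀ z, HasFDerivAt f' (f'' z) z)
    (hlb : ∀ z, fstar ≤ f z) (hatt : ∃ z, f z = fstar)
    (hPL : ∀ z, ‖f' z‖ ^ 2 ≥ 2 * μ * (f z - fstar))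
    (x v a : ℝ → H) (x0 : H)
    (hx : ∀ t, 0 ≤ t → HasDerivAt x (v t) t)
    (hv : ∀ t, 0 ≤ t → HasDerivAt v (a t) t)
    (hode : ∀ t > (0 : ℝ),
      a t + (α / t) • v t + β • (f'' (x t)) (v t) + (γ + α * β / t) • f' (x t) = 0)
    (hx0 : x 0 = x0) (hv0 : v 0 = -β • f' x0) :
    ∀ t > (0 : ℝ),
      (t ≤ α / (μ * β) → f (x t) - fstar ≤ (f x0 - fstar) * Real.exp (-2 * μ * β * t)) ∧
      (α / (μ * β) < t →
        f (x t) - fstar ≤ (f x0 - fstar) * (α / (μ * β * Real.exp 1)) ^ (2 * α) / t ^ (2 * α)) := by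
  have hμβ : 0 < μ * β := mul_pos hμ hβ
  set t₁ : ℝ := α / (μ * β) with ht₁def
  have ht₁ : 0 < t₁ := div_pos hα hμβ
  set w : ℝ → H := fun s => v s + β • f' (x s) with hw
  set E : ℝ → ℝ := fun s => (1/2) * ⟪w s, w s⟫ + γ * (f (x s) - fstar) with hEdef
  set D : ℝ → ℝ := fun s => ⟪a s + β • (f'' (x s)) (v s), w s⟫ + γ * ⟪f' (x s), v s⟫ with hDdef
  -- E has derivative D for s ≥ 0
  have hE : ∀ s, 0 ≤ s → HasDerivAt E (D s) s := by
    intro s hs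
    have hfx : HasDerivAt (fun u => f' (x u)) ((f'' (x s)) (v s)) s :=
      (hhess (x s)).comp_hasDerivAt s (hx s hs)
    have hwd : HasDerivAt w (a s + β • (f'' (x s)) (v s)) s :=
      (hv s hs).add (hfx.const_smul β)
    have hinner := hwd.inner ℝ hwd
    have hfc : HasDerivAt (fun u => f (x u)) (⟪f' (x s), v s⟫) s := by
      have := (hgrad (x s)).hasFDerivAt.comp_hasDerivAt s (hx s hs)
      simp at this
      exact this
    have := (hinner.const_mul (1/2)).add ((hfc.sub_const fstar).const_mul γ)
    have hc := real_inner_comm (w s) (a s + β • (f'' (x s)) (v s))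
    refine this.congr_deriv ?_
    linarith
  -- value of D on (0, ∞)
  have hDeq : ∀ s, 0 < s →
      D s = -(α/s) * ⟪w s, w s⟫ - γ * β * ⟪f' (x s), f' (x s)⟫ := by
    intro s hs
    have key : a s + β • (f'' (x s)) (v s)
        = -((α/s) • (v s + β • f' (x s))) - γ • f' (x s) := by
      linear_combination (norm := module) hode s hs
    rw [hDdef]
    simp only [hw, key, inner_sub_left, inner_add_left, inner_add_right, inner_smul_left,
      inner_smul_right, inner_neg_left, RCLike.conj_to_real,
      real_inner_comm (f' (x s)) (v s)]
    ring
  have hIw : ∀ s, (0:ℝ) ≤ ⟪w s, w s⟫ := fun s => real_inner_self_nonneg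
  have hPL' : ∀ s, 2 * μ * (f (x s) - fstar) ≤ ⟪f' (x s), f' (x s)⟫ := by
    intro s
    rw [real_inner_self_eq_norm_sq]
    exact hPL (x s)
  have hF : ∀ s, (0:ℝ) ≤ f (x s) - fstar := fun s => sub_nonneg.mpr (hlb (x s))
  have hElb : ∀ s, γ * (f (x s) - fstar) ≤ E s := by
    intro s
    have := hIw s
    rw [hEdef]; dsimp only; nlinarith
  have hEnn : ∀ s, 0 ≤ E s := fun s =>
    le_trans (mul_nonneg hγ.le (hF s)) (hElb s)
  have hE0 : E 0 = γ * (f x0 - fstar) := by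
    have hw0 : w 0 = 0 := by
      rw [hw]; dsimp only; rw [hx0, hv0]; simp
    rw [hEdef]; dsimp only; rw [hw0, hx0]; simp
  -- Phase 1: E s * exp(2μβ s) antitone on [0, t₁]
  have hmono1 : AntitoneOn (fun s => E s * Real.exp (2*μ*β*s)) (Set.Icc 0 t₁) := by
    apply antitoneOn_of_deriv_nonpos (convex_Icc 0 t₁)
    · exact ContinuousOn.mul (fun s hs => (hE s hs.1).continuousAt.continuousWithinAt)
        (Real.continuous_exp.comp (by continuity)).continuousOn
    · rw [interior_Icc]
      intro s hs
      exact (((hE s hs.1.le).mul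
        (((hasDerivAt_id s).const_mul (2*μ*β)).exp)).differentiableAt).differentiableWithinAt
    · rw [interior_Icc]
      intro s hs
      have hexp : HasDerivAt (fun u => Real.exp (2*μ*β*u))
          (Real.exp (2*μ*β*s) * (2*μ*β)) s := by
        simpa using (((hasDerivAt_id s).const_mul (2*μ*β)).exp)
      have hg := (hE s hs.1.le).mul hexp
      rw [show deriv (fun s => E s * Real.exp (2*μ*β*s)) s = _ from hg.deriv]
      have hexppos : 0 < Real.exp (2*μ*β*s) := Real.exp_pos _
      have hms : μ * β ≤ α / s := by
        rw [le_div_iff₀ hs.1]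
        calc μ * β * s = s * (μ * β) := by ring
          _ ≤ t₁ * (μ * β) := mul_le_mul_of_nonneg_right hs.2.le hμβ.le
          _ = α := by rw [ht₁def]; exact div_mul_cancel₀ α hμβ.ne'
      have hkey : D s + 2*μ*β * E s ≤ 0 := by
        rw [hDeq s hs.1, hEdef]; dsimp only
        nlinarith [hIw s, hPL' s, hF s, mul_le_mul_of_nonneg_right hms (hIw s),
          mul_le_mul_of_nonneg_left (hPL' s) (mul_pos hγ hβ).le]
      nlinarith [hkey, hEnn s, hexppos]
  have hexp_le : ∀ s, 0 ≤ s → s ≤ t₁ → E s ≤ E 0 * Real.exp (-(2*μ*β*s)) := by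
    intro s hs0 hst
    have h := hmono1 (Set.left_mem_Icc.mpr ht₁.le) ⟨hs0, hst⟩ hs0
    simp only [mul_zero, Real.exp_zero, mul_one] at h
    rw [Real.exp_neg, ← div_eq_mul_inv, le_div_iff₀ (Real.exp_pos _)]
    exact h
  intro t ht
  constructor
  · -- Case 1
    intro htle
    have h1 := hexp_le t ht.le htle
    rw [hE0] at h1
    have h2 := hElb t
    rw [show (-2) * μ * β * t = -(2*μ*β*t) by ring]
    have hmul : γ * (f (x t) - fstar) ≤ γ * ((f x0 - fstar) * Real.exp (-(2*μ*β*t))) := by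
      calc γ * (f (x t) - fstar) ≤ E t := h2
        _ ≤ γ * (f x0 - fstar) * Real.exp (-(2*μ*β*t)) := h1
        _ = γ * ((f x0 - fstar) * Real.exp (-(2*μ*β*t))) := by ring
    exact le_of_mul_le_mul_left hmul hγ
  · -- Case 2
    intro htgt
    have hmono2 : AntitoneOn (fun s => E s * s ^ (2*α)) (Set.Ici t₁) := by
      apply antitoneOn_of_deriv_nonpos (convex_Ici t₁)
      · exact ContinuousOn.mul
          (fun s hs => (hE s (ht₁.le.trans hs)).continuousAt.continuousWithinAt)
          (fun s hs => (Real.continuousAt_rpow_const s (2*α)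
            (Or.inl (ne_of_gt (lt_of_lt_of_le ht₁ hs)))).continuousWithinAt)
      · rw [interior_Ici]
        intro s hs
        have hs0 : 0 < s := ht₁.trans hs
        exact (((hE s hs0.le).mul
          (Real.hasDerivAt_rpow_const (Or.inl hs0.ne'))).differentiableAt).differentiableWithinAt
      · rw [interior_Ici]
        intro s hs
        have hs0 : 0 < s := ht₁.trans hs
        have hg := (hE s hs0.le).mul (Real.hasDerivAt_rpow_const (p := 2*α) (Or.inl hs0.ne'))
        rw [show deriv (fun s => E s * s ^ (2*α)) s = _ from hg.deriv]
        have hP : 0 < s ^ (2*α) := Real.rpow_pos_of_pos hs0 _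
        have hPm : s ^ (2*α - 1) = s ^ (2*α) / s := by
          rw [Real.rpow_sub hs0, Real.rpow_one]
        have hsa : α ≤ μ * β * s := by
          calc α = t₁ * (μ * β) := by rw [ht₁def]; exact (div_mul_cancel₀ α hμβ.ne').symm
            _ ≤ s * (μ * β) := mul_le_mul_of_nonneg_right (le_of_lt hs) hμβ.le
            _ = μ * β * s := by ring
        have hkey : s * D s + 2*α * E s ≤ 0 := by
          rw [hDeq s hs0, hEdef]; dsimp only
          have e1 : s * (-(α / s) * ⟪w s, w s⟫) = -(α * ⟪w s, w s⟫) := by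
            field_simp
          have c1 : s*γ*β*(2*μ*(f (x s) - fstar)) ≤ s*γ*β*⟪f' (x s), f' (x s)⟫ :=
            mul_le_mul_of_nonneg_left (hPL' s) (mul_nonneg (mul_nonneg hs0.le hγ.le) hβ.le)
          have c2 : 2*γ*(f (x s) - fstar)*α ≤ 2*γ*(f (x s) - fstar)*(μ*β*s) :=
            mul_le_mul_of_nonneg_left hsa (mul_nonneg (mul_nonneg (by norm_num) hγ.le) (hF s))
          nlinarith [e1, c1, c2, hIw s]
        have hrw : D s * s ^ (2*α) + E s * (2*α * s ^ (2*α-1))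
            = (s ^ (2*α) / s) * (s * D s + 2*α * E s) := by
          rw [hPm]; field_simp
        rw [hrw]
        exact mul_nonpos_of_nonneg_of_nonpos (div_nonneg hP.le hs0.le) hkey
    have hstep := hmono2 Set.self_mem_Ici (Set.mem_Ici.mpr htgt.le) htgt.le
    dsimp only at hstep
    have hEt₁ : E t₁ ≤ γ * (f x0 - fstar) * Real.exp (-(2*α)) := by
      have h := hexp_le t₁ ht₁.le le_rfl
      rw [hE0] at h
      have harg : 2*μ*β*t₁ = 2*α := by
        rw [ht₁def]; field_simp
      rw [harg] at h
      linarith [h]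
    have hP : 0 < t ^ (2*α) := Real.rpow_pos_of_pos (ht₁.trans htgt) _
    have hQ : 0 < t₁ ^ (2*α) := Real.rpow_pos_of_pos ht₁ _
    have hspec : (α / (μ * β * Real.exp 1)) ^ (2*α)
        = t₁ ^ (2*α) * Real.exp (-(2*α)) := by
      have h1 : α / (μ * β * Real.exp 1) = t₁ / Real.exp 1 := by
        rw [ht₁def]; field_simp
      rw [h1, Real.div_rpow ht₁.le (Real.exp_pos 1).le, Real.exp_one_rpow,
        Real.exp_neg, div_eq_mul_inv]
    rw [hspec]
    have hmul : γ * (f (x t) - fstar)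
        ≤ γ * ((f x0 - fstar) * (t₁ ^ (2*α) * Real.exp (-(2*α))) / t ^ (2*α)) := by
      calc γ * (f (x t) - fstar) ≤ E t := hElb t
        _ ≤ E t₁ * t₁ ^ (2*α) / t ^ (2*α) := by
            rw [le_div_iff₀ hP]; exact hstep
        _ ≤ γ * (f x0 - fstar) * Real.exp (-(2*α)) * t₁ ^ (2*α) / t ^ (2*α) := by
            gcongr
        _ = γ * ((f x0 - fstar) * (t₁ ^ (2*α) * Real.exp (-(2*α))) / t ^ (2*α)) := by ring
    exact le_of_mul_le_mul_left hmul hγ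
end
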